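/- Let G be a critical multigraph with χ'(G) = k+1 where k ≥ Δ(G)+1, let φ be a proper k-edge-coloring of G − v₀v₁, let α be a color missing at v₀ and β a color missing at v₁. Then the maximal (α,β)-bicolored path starting at v₁ ends at v₀; i.e., P_{v₁}(α,β) is a path from v₁ to v₀. -/

import Mathlib

open scoped Classical

/-- A loopless multigraph on vertex type `V` with edge type `E`. -/
structure Multigraph (V : Type*) (E : Type*) where
  ends : E → Sym2 V
  loopless : ∀ e, ¬ (ends e).IsDiag

namespace Multigraph

variable {V E : Type*} (G : Multigraph V E)

/-- Two edges are adjacent if they are distinct and share an endpoint. -/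
def EdgeAdj (e f : E) : Prop := e ≠ f ∧ ∃ v, v ∈ G.ends e ∧ v ∈ G.ends f

/-- A proper `k`-edge-coloring. -/
def IsProperEdgeColoring {k : ℕ} (c : E → Fin k) : Prop :=
  ∀ e f, G.EdgeAdj e f → c e ≠ c f

/-- The chromatic index: least `k` admitting a proper `k`-edge-coloring. -/
noncomputable def chromIndex : ℕ :=
  sInf {k | ∃ c : E → Fin k, G.IsProperEdgeColoring c}

/-- The degree of a vertex (counting multiplicities). -/
noncomputable def degree [Fintype E] (v : V) : ℕ :=
  (Finset.univ.filter (fun e => v ∈ G.ends e)).card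

/-- Maximum degree. -/
noncomputable def maxDegree [Fintype V] [Fintype E] : ℕ :=
  Finset.univ.sup (fun v => G.degree v)

/-- Ceiling division. -/
def cdiv (a b : ℕ) : ℕ := (a + b - 1) / b

/-- The Goldberg--Seymour density bound `W(G)`: the max over subgraphs `H`
(given by a vertex set and a set of edges with both ends in it) with at least
two vertices of `⌈|E(H)| / ⌊|V(H)|/2⌋⌉`. -/
noncomputable def W [Fintype V] [Fintype E] : ℕ :=
  Finset.univ.sup (fun p : Finset V × Finset E =>
    if 2 ≤ p.1.card ∧ ∀ e ∈ p.2, ∀ v ∈ G.ends e, v ∈ p.1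
    then cdiv p.2.card (p.1.card / 2) else 0)

/-- Delete an edge. -/
def deleteEdge (e0 : E) : Multigraph V {f : E // f ≠ e0} where
  ends := fun f => G.ends f.1
  loopless := fun f => G.loopless f.1

/-- A graph is (edge-)critical if deleting any edge decreases the chromatic index. -/
noncomputable def Critical [Fintype V] [Fintype E] : Prop :=
  ∀ e0 : E, (G.deleteEdge e0).chromIndex < G.chromIndex

/-- A graph is elementary if its chromatic index equals `W(G)`. -/
noncomputable def Elementary [Fintype V] [Fintype E] : Prop :=
  G.chromIndex = G.W

/-- The line graph of a multigraph, as a simple graph on the edge type. -/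
def lineGraph : SimpleGraph E where
  Adj := G.EdgeAdj
  symm := ⟨by
    rintro e f ⟨hne, v, hv1, hv2⟩
    exact ⟨hne.symm, v, hv2, hv1⟩⟩
  loopless := ⟨fun e h => h.1 rfl⟩

/-- The multiplicity of the pair `u v`: number of edges joining them. -/
noncomputable def mul [Fintype E] (u v : V) : ℕ :=
  (Finset.univ.filter (fun e => G.ends e = s(u, v))).card

/-- The maximum edge multiplicity. -/
noncomputable def maxMul [Fintype V] [Fintype E] : ℕ :=
  Finset.univ.sup (fun p : V × V => G.mul p.1 p.2)

end Multigraph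

/-- in a critical graph with chi'(G) = k+1, k ≥ Delta(G)+1, given
a proper k-edge-coloring of G − v0v1 with alpha missing at v0 and beta missing
at v1, the maximal (alpha,beta)-bicolored path from v1 ends at v0; in
particular v0 is joined to v1 by a walk whose edges are colored alpha or
beta. -/
theorem stmt16 {V E : Type*} [Fintype V] [Fintype E] (G : Multigraph V E)
    (k : ℕ) (hcrit : G.Critical) (hchi : G.chromIndex = k + 1)
    (hk : G.maxDegree + 1 ≤ k)
    (e0 : E) (v0 v1 : V) (he0 : G.ends e0 = s(v0, v1))
    (c : {f : E // f ≠ e0} → Fin k)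
    (hc : (G.deleteEdge e0).IsProperEdgeColoring c)
    (α β : Fin k)
    (hα : ∀ f : {f : E // f ≠ e0}, v0 ∈ G.ends f.1 → c f ≠ α)
    (hβ : ∀ f : {f : E // f ≠ e0}, v1 ∈ G.ends f.1 → c f ≠ β) :
    Relation.ReflTransGen
      (fun u w => ∃ f : {f : E // f ≠ e0},
        (c f = α ∨ c f = β) ∧ G.ends f.1 = s(u, w)) v1 v0 := by
  classical
  by_contra hR
  set Reach : V → Prop := fun u => Relation.ReflTransGen
      (fun u w => ∃ f : {f : E // f ≠ e0},
        (c f = α ∨ c f = β) ∧ G.ends f.1 = s(u, w)) v1 u with hReachdef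
  have spread : ∀ (f : {f : E // f ≠ e0}), (c f = α ∨ c f = β) →
      ∀ u ∈ G.ends f.1, Reach u → ∀ w ∈ G.ends f.1, Reach w := by
    intro f hcol u hu hRu w hw
    obtain ⟨w', hw'⟩ := Sym2.mem_iff_exists.mp hu
    rw [hw'] at hw
    rcases Sym2.mem_iff.mp hw with rfl | rfl
    · exact hRu
    · exact hRu.tail ⟨f, hcol, hw'⟩
  set Swapped : {f : E // f ≠ e0} → Prop := fun f =>
    (c f = α ∨ c f = β) ∧ ∃ u ∈ G.ends f.1, Reach u with hSwdef
  set c' : E → Fin k := fun e =>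
    if h : e = e0 then α
    else if Swapped ⟨e, h⟩ then (if c ⟨e, h⟩ = α then β else α) else c ⟨e, h⟩
    with hc'def
  have hc'e0 : c' e0 = α := dif_pos rfl
  have hc'ne : ∀ (f : {f : E // f ≠ e0}),
      c' f.1 = if Swapped f then (if c f = α then β else α) else c f := by
    intro f
    simp only [hc'def, dif_neg f.2]
  have key : ∀ (f : {f : E // f ≠ e0}), ∀ v, v ∈ G.ends e0 → v ∈ G.ends f.1 →
      c' f.1 ≠ α := by
    intro f v hv0 hvf
    rw [he0, Sym2.mem_iff] at hv0
    rw [hc'ne f]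
    rcases hv0 with rfl | rfl
    · by_cases hs : Swapped f
      · obtain ⟨u, hu, hru⟩ := hs.2
        exact absurd (spread f hs.1 u hu hru v hvf) hR
      · rw [if_neg hs]; exact hα f hvf
    · by_cases hs : Swapped f
      · have hcfβ : c f ≠ β := hβ f hvf
        have hcfα : c f = α := hs.1.resolve_right hcfβ
        rw [if_pos hs, if_pos hcfα]
        intro h
        exact hcfβ (hcfα.trans h.symm)
      · rw [if_neg hs]
        intro h
        exact hs ⟨Or.inl h, v, hvf, Relation.ReflTransGen.refl⟩
  have hproper : G.IsProperEdgeColoring c' := by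
    rintro e f ⟨hne, v, hve, hvf⟩
    by_cases he : e = e0
    · rw [he] at hve hne ⊢
      have hf : f ≠ e0 := fun h => hne h.symm
      rw [hc'e0]
      exact fun h => key ⟨f, hf⟩ v hve hvf h.symm
    · by_cases hf : f = e0
      · rw [hf] at hvf ⊢
        rw [hc'e0]
        exact key ⟨e, he⟩ v hvf hve
      · have hcc : c ⟨e, he⟩ ≠ c ⟨f, hf⟩ :=
          hc ⟨e, he⟩ ⟨f, hf⟩ ⟨fun h => hne (congrArg Subtype.val h), v, hve, hvf⟩
        rw [hc'ne ⟨e, he⟩, hc'ne ⟨f, hf⟩]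
        by_cases hse : Swapped ⟨e, he⟩ <;> by_cases hsf : Swapped ⟨f, hf⟩
        · rw [if_pos hse, if_pos hsf]
          rcases hse.1 with h1 | h1 <;> rcases hsf.1 with h2 | h2
          · exact absurd (h1.trans h2.symm) hcc
          · have hab : α ≠ β := fun h => hcc (h1.trans (h.trans h2.symm))
            rw [if_pos h1, if_neg (fun hh => hab (hh.symm.trans h2))]
            exact hab.symm
          · have hab : α ≠ β := fun h => hcc (h1.trans (h.symm.trans h2.symm))
            rw [if_neg (fun hh => hab (hh.symm.trans h1)), if_pos h2]
            exact hab
          · exact absurd (h1.trans h2.symm) hcc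
        · rw [if_pos hse, if_neg hsf]
          have hno : ¬ (c ⟨f, hf⟩ = α ∨ c ⟨f, hf⟩ = β) := by
            intro hcol
            obtain ⟨u, hu, hru⟩ := hse.2
            exact hsf ⟨hcol, v, hvf, spread ⟨e, he⟩ hse.1 u hu hru v hve⟩
          push_neg at hno
          split_ifs
          · exact fun h => hno.2 h.symm
          · exact fun h => hno.1 h.symm
        · rw [if_neg hse, if_pos hsf]
          have hno : ¬ (c ⟨e, he⟩ = α ∨ c ⟨e, he⟩ = β) := by
            intro hcol
            obtain ⟨u, hu, hru⟩ := hsf.2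
            exact hse ⟨hcol, v, hve, spread ⟨f, hf⟩ hsf.1 u hu hru v hvf⟩
          push_neg at hno
          split_ifs
          · exact hno.2
          · exact hno.1
        · rw [if_neg hse, if_neg hsf]; exact hcc
  have hle : G.chromIndex ≤ k := Nat.sInf_le ⟨c', hproper⟩
  omega
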